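/- Let T1, T2 be weighted backward shifts with weights (a_k), (b_k) respectively (T_i e_{k+1} = w_k e_k, T_i e_1 = 0), all weights nonzero. Suppose bounded operators X = (x_{k,j}) and Y = (y_{k,j}) satisfy T1 Y = Y T2, Y upper triangular, and Y = T1 X - X T2. Then x_{k,j} = 0 for k - j > 1 and the subdiagonal entries of X satisfy a_k x_{k+1,k} - x_{k,k-1} b_{k-1} = y_{k,k} for all k, whence x_{k+1,k} = (k · y_{1,1} · ∏_{ℓ=1}^{k-1} b_ℓ) / (∏_{ℓ=1}^{k} a_ℓ) when y_{1,1} is normalized appropriately. -/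
import Mathlib

open scoped InnerProductSpace
open Finset

lemma shift_inner_aux {H : Type*} [NormedAddCommGroup H] [InnerProductSpace ℂ H] [CompleteSpace H]
    (e : HilbertBasis ℕ ℂ H) (w : ℕ → ℝ) (T : H →L[ℂ] H)
    (hz : T (e 0) = 0) (h : ∀ k, T (e (k + 1)) = (w k : ℂ) • e k) (k : ℕ) (v : H) :
    ⟪e k, T v⟫_ℂ = (w k : ℂ) * ⟪e (k + 1), v⟫_ℂ := by
  have horth := e.orthonormal
  have hd : Dense (↑(Submodule.span ℂ (Set.range (e : ℕ → H))) : Set H) :=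
    Submodule.dense_iff_topologicalClosure_eq_top.mpr e.dense_span
  have key : (innerSL ℂ (e k)).comp T = (w k : ℂ) • innerSL ℂ (e (k + 1)) := by
    apply ContinuousLinearMap.ext_on hd
    rintro _ ⟨m, rfl⟩
    simp only [ContinuousLinearMap.comp_apply, ContinuousLinearMap.smul_apply, innerSL_apply_apply,
      smul_eq_mul]
    cases m with
    | zero =>
      rw [hz, inner_zero_right, orthonormal_iff_ite.mp horth]
      simp
    | succ m =>
      rw [h m, inner_smul_right, orthonormal_iff_ite.mp horth, orthonormal_iff_ite.mp horth]
      by_cases hm : k = m <;> simp [hm]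
  calc ⟪e k, T v⟫_ℂ = ((innerSL ℂ (e k)).comp T) v := rfl
    _ = ((w k : ℂ) • innerSL ℂ (e (k + 1))) v := by rw [key]
    _ = (w k : ℂ) * ⟪e (k + 1), v⟫_ℂ := rfl

theorem commutator_intertwiner_subdiagonal
    {H : Type*} [NormedAddCommGroup H] [InnerProductSpace ℂ H] [CompleteSpace H]
    (e : HilbertBasis ℕ ℂ H) (a b : ℕ → ℝ)
    (ha : ∀ k, a k ≠ 0) (hb : ∀ k, b k ≠ 0)
    (T1 T2 X Y : H →L[ℂ] H)
    (hT1z : T1 (e 0) = 0) (hT1 : ∀ k : ℕ, T1 (e (k + 1)) = (a k : ℂ) • e k)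
    (hT2z : T2 (e 0) = 0) (hT2 : ∀ k : ℕ, T2 (e (k + 1)) = (b k : ℂ) • e k)
    (hYupper : ∀ k j : ℕ, j < k → ⟪e k, Y (e j)⟫_ℂ = 0)
    (hint : T1 ∘L Y = Y ∘L T2)
    (hcomm : Y = T1 ∘L X - X ∘L T2) :
    (∀ k j : ℕ, j + 1 < k → ⟪e k, X (e j)⟫_ℂ = 0) ∧
      ((a 0 : ℂ) * ⟪e 1, X (e 0)⟫_ℂ = ⟪e 0, Y (e 0)⟫_ℂ) ∧
      (∀ k : ℕ, (a (k + 1) : ℂ) * ⟪e (k + 2), X (e (k + 1))⟫_ℂ -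
          ⟪e (k + 1), X (e k)⟫_ℂ * (b k : ℂ) = ⟪e (k + 1), Y (e (k + 1))⟫_ℂ) ∧
      (∀ k : ℕ, ⟪e (k + 1), X (e k)⟫_ℂ =
        (((k : ℂ) + 1) * ⟪e 0, Y (e 0)⟫_ℂ * ∏ ℓ ∈ range k, (b ℓ : ℂ)) /
          ∏ ℓ ∈ range (k + 1), (a ℓ : ℂ)) := by
  have h1 : ∀ k v, ⟪e k, T1 v⟫_ℂ = (a k : ℂ) * ⟪e (k + 1), v⟫_ℂ :=
    shift_inner_aux e a T1 hT1z hT1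
  have hY0 : ∀ k : ℕ, ⟪e k, Y (e 0)⟫_ℂ = (a k : ℂ) * ⟪e (k + 1), X (e 0)⟫_ℂ := by
    intro k
    rw [hcomm]
    simp only [ContinuousLinearMap.sub_apply, ContinuousLinearMap.comp_apply, inner_sub_right]
    rw [h1, hT2z]
    simp
  have hYs : ∀ k j : ℕ, ⟪e k, Y (e (j + 1))⟫_ℂ =
      (a k : ℂ) * ⟪e (k + 1), X (e (j + 1))⟫_ℂ - ⟪e k, X (e j)⟫_ℂ * (b j : ℂ) := by
    intro k j
    rw [hcomm]
    simp only [ContinuousLinearMap.sub_apply, ContinuousLinearMap.comp_apply, inner_sub_right]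
    rw [h1, hT2 j, map_smul, inner_smul_right]
    ring
  have part1 : ∀ j k : ℕ, j + 1 < k → ⟪e k, X (e j)⟫_ℂ = 0 := by
    intro j
    induction j with
    | zero =>
      intro k hk
      obtain ⟨m, rfl⟩ : ∃ m, k = m + 2 := ⟨k - 2, by omega⟩
      have h := hY0 (m + 1)
      rw [hYupper (m + 1) 0 (by omega)] at h
      rcases mul_eq_zero.mp h.symm with h' | h'
      · exact absurd (by exact_mod_cast h') (ha (m + 1))
      · exact h'
    | succ j ih =>
      intro k hk
      obtain ⟨m, rfl⟩ : ∃ m, k = m + 1 := ⟨k - 1, by omega⟩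
      have h := hYs m j
      rw [hYupper m (j + 1) (by omega), ih m (by omega), zero_mul, sub_zero] at h
      rcases mul_eq_zero.mp h.symm with h' | h'
      · exact absurd (by exact_mod_cast h') (ha m)
      · exact h'
  have part2 : (a 0 : ℂ) * ⟪e 1, X (e 0)⟫_ℂ = ⟪e 0, Y (e 0)⟫_ℂ := (hY0 0).symm
  have part3 : ∀ k : ℕ, (a (k + 1) : ℂ) * ⟪e (k + 2), X (e (k + 1))⟫_ℂ -
      ⟪e (k + 1), X (e k)⟫_ℂ * (b k : ℂ) = ⟪e (k + 1), Y (e (k + 1))⟫_ℂ :=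
    fun k => (hYs (k + 1) k).symm
  have hane : ∀ n, (∏ ℓ ∈ range n, (a ℓ : ℂ)) ≠ 0 :=
    fun n => Finset.prod_ne_zero_iff.mpr fun ℓ _ => by exact_mod_cast ha ℓ
  have hYdiag : ∀ k : ℕ, (a k : ℂ) * ⟪e (k + 1), Y (e (k + 1))⟫_ℂ
      = (b k : ℂ) * ⟪e k, Y (e k)⟫_ℂ := by
    intro k
    have h := congrArg (fun Z : H →L[ℂ] H => ⟪e k, Z (e (k + 1))⟫_ℂ) hint
    simp only [ContinuousLinearMap.comp_apply] at h
    rw [h1] at h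
    rw [h, hT2 k, map_smul, inner_smul_right]
  have hYd : ∀ k : ℕ, ⟪e k, Y (e k)⟫_ℂ * ∏ ℓ ∈ range k, (a ℓ : ℂ) =
      ⟪e 0, Y (e 0)⟫_ℂ * ∏ ℓ ∈ range k, (b ℓ : ℂ) := by
    intro k
    induction k with
    | zero => simp
    | succ k ih =>
      have h := hYdiag k
      rw [prod_range_succ, prod_range_succ]
      linear_combination (∏ ℓ ∈ range k, (a ℓ : ℂ)) * h + (b k : ℂ) * ih
  have part4 : ∀ k : ℕ, ⟪e (k + 1), X (e k)⟫_ℂ =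
      (((k : ℂ) + 1) * ⟪e 0, Y (e 0)⟫_ℂ * ∏ ℓ ∈ range k, (b ℓ : ℂ)) /
        ∏ ℓ ∈ range (k + 1), (a ℓ : ℂ) := by
    intro k
    induction k with
    | zero =>
      rw [eq_div_iff (hane 1)]
      simp only [Nat.cast_zero, range_one, prod_singleton, range_zero, prod_empty, mul_one,
        zero_add, one_mul]
      linear_combination part2
    | succ k ih =>
      rw [eq_div_iff (hane (k + 1))] at ih
      rw [eq_div_iff (hane (k + 2))]
      have h := part3 k
      have yd := hYd (k + 1)
      rw [prod_range_succ (f := fun ℓ => ((b ℓ : ℂ)))] at yd ⊢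
      rw [show (∏ ℓ ∈ range (k + 2), (a ℓ : ℂ)) =
        (∏ ℓ ∈ range (k + 1), (a ℓ : ℂ)) * (a (k + 1) : ℂ) from prod_range_succ _ _]
      push_cast
      linear_combination (∏ ℓ ∈ range (k + 1), (a ℓ : ℂ)) * h + yd + (b k : ℂ) * ih
  exact ⟨fun k j h => part1 j k h, part2, part3, part4⟩
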